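/- Let F be a field and p a prime number. Then D = ⋃_{n≥0} F[X^{1/p^n}, X^{-1/p^n}] is a Bézout domain of Krull dimension one, and D is not a Dedekind domain. -/

import Mathlib

set_option synthInstance.maxHeartbeats 1000000
set_option maxHeartbeats 1000000

open Polynomial AddMonoidAlgebra

noncomputable section

/-- The subgroup of `ℚ` generated by `{1/pⁿ : n ∈ ℕ}`. -/
def expGroup (p : ℕ) : AddSubgroup ℚ :=
  AddSubgroup.closure (Set.range fun n : ℕ => ((p : ℚ) ^ n)⁻¹)

instance (p : ℕ) : UniqueSums (expGroup p) :=
  UniqueSums.of_injective_addHom ((expGroup p).subtype : _ →+ ℚ).toAddHom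
    Subtype.val_injective inferInstance

/-- `D = ⋃_{n≥0} F[X^{1/pⁿ}, X^{-1/pⁿ}]`, realized as the group algebra `F[X;G]`
where `G` is the subgroup of `ℚ` generated by `{1/pⁿ : n ≥ 0}`. -/
abbrev LaurentUnion (F : Type*) [Field F] (p : ℕ) : Type _ :=
  AddMonoidAlgebra F (expGroup p)

instance (F : Type*) [Field F] (p : ℕ) : IsDomain (LaurentUnion F p) :=
  NoZeroDivisors.to_isDomain _

/-- The element `1/pⁿ` of the subgroup `G`. -/
def expGen (p n : ℕ) : expGroup p :=
  ⟨((p : ℚ) ^ n)⁻¹, AddSubgroup.subset_closure ⟨n, rfl⟩⟩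

/-- The monomial `X^{1/pⁿ}` in `D`. -/
def XRoot (F : Type*) [Field F] (p n : ℕ) : LaurentUnion F p :=
  AddMonoidAlgebra.single (expGen p n) 1

/-- The subring `Dₙ = F[X^{1/pⁿ}, X^{-1/pⁿ}]` of `D`, as a subalgebra. -/
def DSub (F : Type*) [Field F] (p n : ℕ) : Subalgebra F (LaurentUnion F p) :=
  Algebra.adjoin F {XRoot F p n, AddMonoidAlgebra.single (-expGen p n) 1}

/-- The subring `Rₙ = F[X^{1/pⁿ}]` of `D`, as a subalgebra. -/
def RSub (F : Type*) [Field F] (p n : ℕ) : Subalgebra F (LaurentUnion F p) :=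
  Algebra.adjoin F {XRoot F p n}

lemma XRoot_mem_DSub (F : Type*) [Field F] (p n : ℕ) : XRoot F p n ∈ DSub F p n :=
  Algebra.subset_adjoin (by simp)

lemma aeval_XRoot_mem_DSub (F : Type*) [Field F] (p n : ℕ) (f : Polynomial F) :
    Polynomial.aeval (XRoot F p n) f ∈ DSub F p n :=
  Algebra.adjoin_le (Set.singleton_subset_iff.mpr (XRoot_mem_DSub F p n))
    (Polynomial.aeval_mem_adjoin_singleton _ _)

lemma aeval_XRoot_mem_RSub (F : Type*) [Field F] (p n : ℕ) (f : Polynomial F) :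
    Polynomial.aeval (XRoot F p n) f ∈ RSub F p n :=
  Polynomial.aeval_mem_adjoin_singleton _ _

lemma XRoot_pow (F : Type*) [Field F] {p : ℕ} (hp : p ≠ 0) {m n : ℕ} (h : m ≤ n) :
    XRoot F p n ^ p ^ (n - m) = XRoot F p m := by
  rw [XRoot, XRoot, AddMonoidAlgebra.single_pow, one_pow]
  congr 1
  ext
  have hp' : (p : ℚ) ≠ 0 := Nat.cast_ne_zero.mpr hp
  push_cast
  rw [nsmul_eq_mul]
  push_cast [expGen]
  field_simp
  rw [← pow_add, Nat.sub_add_cancel h]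

lemma DSub_mono (F : Type*) [Field F] {p : ℕ} (hp : p ≠ 0) {m n : ℕ} (h : m ≤ n) :
    DSub F p m ≤ DSub F p n := by
  apply Algebra.adjoin_le
  rintro x (rfl | rfl)
  · rw [← XRoot_pow F hp h]
    exact pow_mem (Algebra.subset_adjoin (by simp)) _
  · rw [show (AddMonoidAlgebra.single (-expGen p m) 1 : LaurentUnion F p)
        = (AddMonoidAlgebra.single (-expGen p n) 1 : LaurentUnion F p) ^ p ^ (n - m) from ?_]
    · exact pow_mem (Algebra.subset_adjoin (by simp)) _
    · rw [AddMonoidAlgebra.single_pow, one_pow]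
      congr 1
      ext
      have hp' : (p : ℚ) ≠ 0 := Nat.cast_ne_zero.mpr hp
      push_cast
      rw [nsmul_eq_mul]
      push_cast [expGen]
      field_simp
      rw [← pow_add, Nat.add_sub_of_le h]

section Aux
variable {F : Type*} [Field F] {p : ℕ} (hp : p.Prime)

lemma expGen_val (p n : ℕ) : ((expGen p n : expGroup p) : ℚ) = ((p : ℚ) ^ n)⁻¹ := rfl

lemma expGen_ne_zero (hp : p.Prime) (n : ℕ) : expGen p n ≠ 0 := by
  intro h
  have := congrArg (Subtype.val) h
  simp only [expGen] at this
  have hp' : (p : ℚ) ≠ 0 := Nat.cast_ne_zero.mpr hp.ne_zero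
  simp [pow_ne_zero, hp'] at this

lemma zsmul_expGen_lift (hp : p.Prime) {N M : ℕ} (h : N ≤ M) (k : ℤ) :
    k • expGen p N = (k * (p : ℤ) ^ (M - N)) • expGen p M := by
  ext
  have hp' : (p : ℚ) ≠ 0 := Nat.cast_ne_zero.mpr hp.ne_zero
  push_cast [expGen]
  rw [zsmul_eq_mul, zsmul_eq_mul]
  push_cast
  field_simp
  rw [mul_assoc, ← pow_add, Nat.add_sub_of_le h]

lemma exists_expGen_rep (hp : p.Prime) (g : expGroup p) :
    ∃ (N : ℕ) (k : ℤ), g = k • expGen p N := by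
  obtain ⟨q, hq⟩ := g
  have : ∃ (N : ℕ) (k : ℤ), q = k * ((p:ℚ) ^ N)⁻¹ := by
    induction hq using AddSubgroup.closure_induction with
    | mem x hx => obtain ⟨n, rfl⟩ := hx; exact ⟨n, 1, by simp⟩
    | zero => exact ⟨0, 0, by simp⟩
    | add x y hx hy ihx ihy =>
        obtain ⟨N, k, rfl⟩ := ihx
        obtain ⟨M, l, rfl⟩ := ihy
        refine ⟨N + M, k * p ^ M + l * p ^ N, ?_⟩
        have hp' : (p : ℚ) ≠ 0 := Nat.cast_ne_zero.mpr hp.ne_zero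
        push_cast
        rw [pow_add]
        field_simp
    | neg x hx ihx =>
        obtain ⟨N, k, rfl⟩ := ihx
        exact ⟨N, -k, by push_cast; ring⟩
  obtain ⟨N, k, rfl⟩ := this
  refine ⟨N, k, ?_⟩
  ext
  push_cast [expGen]
  rw [zsmul_eq_mul]

end Aux

section Aux2
variable {F : Type*} [Field F] {p : ℕ}

lemma isUnit_single (g : expGroup p) : IsUnit (AddMonoidAlgebra.single g (1:F)) := by
  refine IsUnit.of_mul_eq_one (AddMonoidAlgebra.single (-g) 1) ?_
  rw [AddMonoidAlgebra.single_mul_single, add_neg_cancel, one_mul,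
    AddMonoidAlgebra.one_def]

lemma XRoot_pow_nat (m k : ℕ) :
    XRoot F p m ^ k = AddMonoidAlgebra.single (k • expGen p m) (1:F) := by
  rw [XRoot, AddMonoidAlgebra.single_pow, one_pow]

lemma aeval_C_mul_X_pow (m k : ℕ) (c : F) :
    Polynomial.aeval (XRoot F p m) (Polynomial.C c * Polynomial.X ^ k)
      = AddMonoidAlgebra.single (k • expGen p m) c := by
  rw [map_mul, Polynomial.aeval_C, map_pow, Polynomial.aeval_X, XRoot_pow_nat,
    AddMonoidAlgebra.coe_algebraMap]
  simp only [Function.comp_apply]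
  rw [AddMonoidAlgebra.single_mul_single, zero_add, mul_one]
  simp

/-- The algebra embedding `F[T] → D`, `T ↦ X^{1/pᵐ}`, as a mapDomain map. -/
def toD (F : Type*) [Field F] (p m : ℕ) : Polynomial F →ₐ[F] LaurentUnion F p :=
  (AddMonoidAlgebra.mapDomainAlgHom F F (multiplesHom (expGroup p) (expGen p m))).comp
    (Polynomial.toFinsuppIsoAlg F).toAlgHom

lemma aeval_XRoot_eq_toD (m : ℕ) :
    (Polynomial.aeval (XRoot F p m) : Polynomial F →ₐ[F] LaurentUnion F p) = toD F p m := by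
  refine Polynomial.algHom_ext ?_
  simp [toD, XRoot, Polynomial.toFinsuppIsoAlg, Polynomial.toFinsupp_X]

lemma aeval_XRoot_injective (hp : p.Prime) (m : ℕ) :
    Function.Injective (Polynomial.aeval (XRoot F p m) : Polynomial F → LaurentUnion F p) := by
  have h1 : Function.Injective (fun k : ℕ => k • expGen p m) := by
    intro k l hkl
    have := congrArg Subtype.val hkl
    push_cast at this
    simp only [nsmul_eq_mul, expGen_val] at this
    have hp' : ((p:ℚ) ^ m)⁻¹ ≠ 0 := by
      simp [Nat.cast_ne_zero.mpr hp.ne_zero]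
    exact_mod_cast mul_right_cancel₀ hp' this
  have : Function.Injective (toD F p m) := by
    intro a b hab
    apply (Polynomial.toFinsuppIsoAlg F).injective
    apply AddMonoidAlgebra.mapDomain_injective (f := ⇑(multiplesHom (expGroup p) (expGen p m))) h1
    simpa [toD, AddMonoidAlgebra.mapDomainAlgHom_apply] using hab
  rw [show (Polynomial.aeval (XRoot F p m) : Polynomial F → LaurentUnion F p)
      = ⇑(toD F p m) by rw [← aeval_XRoot_eq_toD]]
  exact this

end Aux2

section Rep
variable {F : Type*} [Field F] {p : ℕ}

lemma exists_level (hp : p.Prime) (x : LaurentUnion F p) (n₀ : ℕ) :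
    ∃ m, n₀ ≤ m ∧ ∀ g ∈ x.coeff.support, ∃ k : ℤ, g = k • expGen p m := by
  classical
  have H : ∀ s : Finset (expGroup p), ∃ N, ∀ g ∈ s, ∃ k : ℤ, g = k • expGen p N := by
    intro s
    induction s using Finset.induction with
    | empty => exact ⟨0, by simp⟩
    | @insert a s ha ih =>
        obtain ⟨N, hN⟩ := ih
        obtain ⟨M, k, hk⟩ := exists_expGen_rep hp a
        refine ⟨max N M, fun g hg => ?_⟩
        rcases Finset.mem_insert.mp hg with rfl | hg
        · exact ⟨k * (p:ℤ) ^ (max N M - M), by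
            rw [hk, zsmul_expGen_lift hp (le_max_right N M)]⟩
        · obtain ⟨k', hk'⟩ := hN g hg
          exact ⟨k' * (p:ℤ) ^ (max N M - N), by
            rw [hk', zsmul_expGen_lift hp (le_max_left N M)]⟩
  obtain ⟨N, hN⟩ := H x.coeff.support
  refine ⟨max N n₀, le_max_right N n₀, fun g hg => ?_⟩
  obtain ⟨k, hk⟩ := hN g hg
  exact ⟨k * (p:ℤ) ^ (max N n₀ - N), by rw [hk, zsmul_expGen_lift hp (le_max_left N n₀)]⟩

lemma exists_rep (hp : p.Prime) (x : LaurentUnion F p) (n₀ : ℕ) :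
    ∃ (m : ℕ) (k : ℤ) (A : Polynomial F), n₀ ≤ m ∧
      x = AddMonoidAlgebra.single (k • expGen p m) 1 * Polynomial.aeval (XRoot F p m) A := by
  classical
  obtain ⟨m, hm, hsupp⟩ := exists_level hp x n₀
  set e := expGen p m with he
  let K : expGroup p → ℤ := fun g =>
    if h : ∃ k : ℤ, g = k • e then h.choose else 0
  have hK : ∀ g ∈ x.coeff.support, g = K g • e := by
    intro g hg
    obtain ⟨k, hk⟩ := hsupp g hg
    have h : ∃ k : ℤ, g = k • e := ⟨k, hk⟩
    simp only [K, dif_pos h]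
    exact h.choose_spec
  set B : ℕ := x.coeff.support.sup fun g => (-K g).toNat with hB
  have hKB : ∀ g ∈ x.coeff.support, 0 ≤ K g + B := by
    intro g hg
    have h1 : (-K g).toNat ≤ B := Finset.le_sup (f := fun g => (-K g).toNat) hg
    have h2 : -K g ≤ ((-K g).toNat : ℤ) := Int.self_le_toNat _
    omega
  refine ⟨m, -(B:ℤ), ∑ g ∈ x.coeff.support, Polynomial.C (x.coeff g) * Polynomial.X ^ (K g + B).toNat,
    hm, ?_⟩
  rw [map_sum, Finset.mul_sum]
  have : ∀ g ∈ x.coeff.support,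
      AddMonoidAlgebra.single (-(B:ℤ) • e) (1:F) *
        Polynomial.aeval (XRoot F p m) (Polynomial.C (x.coeff g) * Polynomial.X ^ (K g + B).toNat)
      = AddMonoidAlgebra.single g (x.coeff g) := by
    intro g hg
    rw [aeval_C_mul_X_pow, AddMonoidAlgebra.single_mul_single, one_mul]
    congr 1
    have h1 : ((K g + B).toNat : ℤ) = K g + B := Int.toNat_of_nonneg (hKB g hg)
    calc -(B:ℤ) • e + (K g + B).toNat • e
        = -(B:ℤ) • e + ((K g + B).toNat : ℤ) • e := by rw [natCast_zsmul]
      _ = (-(B:ℤ) + (K g + B)) • e := by rw [h1, ← add_zsmul]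
      _ = K g • e := by ring_nf
      _ = g := (hK g hg).symm
  rw [Finset.sum_congr rfl this]
  have hx := AddMonoidAlgebra.sum_coeff_single x
  rw [Finsupp.sum] at hx
  exact hx.symm

lemma aeval_XRoot_sub_one (hp : p ≠ 0) {n m : ℕ} (h : n ≤ m) :
    Polynomial.aeval (XRoot F p m) (Polynomial.X ^ p ^ (m - n) - 1 : Polynomial F)
      = XRoot F p n - 1 := by
  have : Polynomial.aeval (XRoot F p m) (Polynomial.X ^ p ^ (m - n) : Polynomial F)
      = XRoot F p n := by
    rw [map_pow, Polynomial.aeval_X, XRoot_pow F hp h]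
  simp only [map_sub, map_one]
  rw [this]

end Rep

section Main
variable {F : Type*} [Field F] {p : ℕ}

lemma rep_lift (hp : p.Prime) {m M : ℕ} (h : m ≤ M) (k : ℤ) (A : Polynomial F) :
    AddMonoidAlgebra.single (k • expGen p m) (1:F) * Polynomial.aeval (XRoot F p m) A
      = AddMonoidAlgebra.single ((k * (p:ℤ) ^ (M - m)) • expGen p M) 1 *
        Polynomial.aeval (XRoot F p M) (A.comp (Polynomial.X ^ p ^ (M - m))) := by
  have h1 : Polynomial.aeval (XRoot F p M) (Polynomial.X ^ p ^ (M - m) : Polynomial F)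
      = XRoot F p m := by
    rw [map_pow, Polynomial.aeval_X, XRoot_pow F hp.ne_zero h]
  rw [Polynomial.aeval_comp, h1, ← zsmul_expGen_lift hp h]

lemma exists_rep_pair (hp : p.Prime) (x y : LaurentUnion F p) (n₀ : ℕ) :
    ∃ (m : ℕ) (k l : ℤ) (A B : Polynomial F), n₀ ≤ m ∧
      x = AddMonoidAlgebra.single (k • expGen p m) 1 * Polynomial.aeval (XRoot F p m) A ∧
      y = AddMonoidAlgebra.single (l • expGen p m) 1 * Polynomial.aeval (XRoot F p m) B := by
  obtain ⟨m, k, A, hm, hx⟩ := exists_rep hp x n₀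
  obtain ⟨M, l, B, hM, hy⟩ := exists_rep hp y m
  exact ⟨M, k * (p:ℤ) ^ (M - m), l, A.comp (Polynomial.X ^ p ^ (M - m)), B,
    le_trans hm hM, by rw [hx, rep_lift hp hM], hy⟩

lemma span_pair_unit_mul {R : Type*} [CommRing R] {u v : R} (hu : IsUnit u) (hv : IsUnit v)
    (a b : R) : Ideal.span {u * a, v * b} = Ideal.span {a, b} := by
  apply le_antisymm
  · rw [Ideal.span_le]
    rintro z (rfl | rfl)
    · exact Ideal.mul_mem_left _ u (Ideal.subset_span (Or.inl rfl))
    · exact Ideal.mul_mem_left _ v (Ideal.subset_span (Or.inr rfl))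
  · rw [Ideal.span_le]
    obtain ⟨U, rfl⟩ := hu
    obtain ⟨V, rfl⟩ := hv
    rintro z (rfl | rfl)
    · have h1 : (↑U : R) * z ∈ Ideal.span {↑U * z, ↑V * b} :=
        Ideal.subset_span (Set.mem_insert _ _)
      have h2 := Ideal.mul_mem_left _ (↑U⁻¹ : R) h1
      rwa [← mul_assoc, U.inv_mul, one_mul] at h2
    · have h1 : (↑V : R) * z ∈ Ideal.span {↑U * a, ↑V * z} :=
        Ideal.subset_span (Set.mem_insert_of_mem _ rfl)
      have h2 := Ideal.mul_mem_left _ (↑V⁻¹ : R) h1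
      rwa [← mul_assoc, V.inv_mul, one_mul] at h2

lemma laurentUnion_isBezout (hp : p.Prime) : IsBezout (LaurentUnion F p) := by
  rw [IsBezout.iff_span_pair_isPrincipal]
  intro x y
  obtain ⟨m, k, l, A, B, -, hx, hy⟩ := exists_rep_pair hp x y 0
  rw [hx, hy, span_pair_unit_mul (isUnit_single _) (isUnit_single _)]
  obtain ⟨d, hd⟩ := Submodule.IsPrincipal.principal (Ideal.span {A, B})
  refine ⟨⟨Polynomial.aeval (XRoot F p m) d, ?_⟩⟩
  have hmap := congrArg
    (Ideal.map ((Polynomial.aeval (XRoot F p m) : Polynomial F →ₐ[F] LaurentUnion F p) :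
      Polynomial F →+* LaurentUnion F p)) hd
  rw [Ideal.map_span, Set.image_pair,
    show Submodule.span (Polynomial F) {d} = Ideal.span {d} from rfl,
    Ideal.map_span, Set.image_singleton] at hmap
  simpa using hmap

lemma not_dvd_succ (hp : p.Prime) (n : ℕ) :
    ¬ (XRoot F p n - 1) ∣ (XRoot F p (n + 1) - 1) := by
  rintro ⟨f, hf⟩
  obtain ⟨m, k, A, hm, rfl⟩ := exists_rep hp f (n + 1)
  have hn : n ≤ m := le_trans (Nat.le_succ n) hm
  set e := expGen p m with he
  set q := p ^ (m - n) with hq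
  set a := p ^ (m - (n + 1)) with ha
  have hq1 : 1 ≤ q := Nat.one_le_iff_ne_zero.mpr (pow_ne_zero _ hp.ne_zero)
  have haq : a < q := by
    rw [hq, ha]
    exact Nat.pow_lt_pow_right hp.one_lt (by omega)
  set j : ℕ := (-k).toNat with hj
  have hkj : 0 ≤ k + j := by
    have := Int.self_le_toNat (-k)
    omega
  set t : ℕ := (k + j).toNat with ht
  have htkj : (t : ℤ) = k + j := Int.toNat_of_nonneg hkj
  -- turn the divisibility into a polynomial identity
  have key : (Polynomial.X : Polynomial F) ^ j * (Polynomial.X ^ a - 1)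
      = Polynomial.X ^ t * A * (Polynomial.X ^ q - 1) := by
    apply aeval_XRoot_injective hp m
    have e1 : ∀ c : ℕ, Polynomial.aeval (XRoot F p m) ((Polynomial.X : Polynomial F) ^ c)
        = AddMonoidAlgebra.single ((c : ℤ) • e) (1 : F) := by
      intro c
      rw [map_pow, Polynomial.aeval_X, XRoot_pow_nat, natCast_zsmul]
    have e2 : Polynomial.aeval (XRoot F p m) ((Polynomial.X : Polynomial F) ^ a - 1)
        = XRoot F p (n+1) - 1 := by
      have := aeval_XRoot_sub_one (F := F) hp.ne_zero hm
      rwa [← ha] at this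
    have e3 : Polynomial.aeval (XRoot F p m) ((Polynomial.X : Polynomial F) ^ q - 1)
        = XRoot F p n - 1 := by
      have := aeval_XRoot_sub_one (F := F) hp.ne_zero hn
      rwa [← hq] at this
    rw [map_mul, map_mul, map_mul, e1, e1, e2, e3, hf]
    rw [show AddMonoidAlgebra.single ((t:ℤ) • e) (1:F) = AddMonoidAlgebra.single ((j:ℤ) • e) 1
          * AddMonoidAlgebra.single (k • e) 1 from ?_]
    · ring
    · rw [AddMonoidAlgebra.single_mul_single, one_mul, ← add_zsmul, htkj]
      congr 2
      omega
  -- coprimality and degrees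
  have hcop : IsCoprime ((Polynomial.X : Polynomial F) ^ q - 1) (Polynomial.X ^ j) := by
    refine IsCoprime.pow_right ?_
    refine ⟨-1, Polynomial.X ^ (q - 1), ?_⟩
    have : (Polynomial.X : Polynomial F) ^ (q - 1) * Polynomial.X = Polynomial.X ^ q := by
      rw [← pow_succ, Nat.sub_add_cancel hq1]
    rw [this]; ring
  have hdvd : ((Polynomial.X : Polynomial F) ^ q - 1) ∣ Polynomial.X ^ j * (Polynomial.X ^ a - 1) :=
    ⟨Polynomial.X ^ t * A, by rw [key]; ring⟩
  have hdvd2 : ((Polynomial.X : Polynomial F) ^ q - 1) ∣ (Polynomial.X ^ a - 1) :=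
    hcop.dvd_of_dvd_mul_left hdvd
  have hne : ((Polynomial.X : Polynomial F) ^ a - 1) ≠ 0 := by
    have ha0 : 0 < a := Nat.pos_of_ne_zero (by rw [ha]; exact pow_ne_zero _ hp.ne_zero)
    have := Polynomial.X_pow_sub_C_ne_zero (R := F) ha0 (1 : F)
    rwa [map_one] at this
  have hdeg := Polynomial.natDegree_le_of_dvd hdvd2 hne
  rw [show ((Polynomial.X : Polynomial F) ^ q - 1) = Polynomial.X ^ q - Polynomial.C 1 by
        rw [map_one],
      show ((Polynomial.X : Polynomial F) ^ a - 1) = Polynomial.X ^ a - Polynomial.C 1 by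
        rw [map_one],
      Polynomial.natDegree_X_pow_sub_C, Polynomial.natDegree_X_pow_sub_C] at hdeg
  omega

end Main

section Main2
variable {F : Type*} [Field F] {p : ℕ}

/-- The augmentation map `D → F`, `X^g ↦ 1`. -/
def augD (F : Type*) [Field F] (p : ℕ) : LaurentUnion F p →ₐ[F] F :=
  AddMonoidAlgebra.lift F F (expGroup p) 1

lemma augD_single (g : expGroup p) (c : F) :
    augD F p (AddMonoidAlgebra.single g c) = c := by
  rw [augD, AddMonoidAlgebra.lift_single]
  simp

lemma XRoot_sub_one_ne_zero (hp : p.Prime) (n : ℕ) : XRoot F p n - 1 ≠ 0 := by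
  rw [sub_ne_zero, XRoot, AddMonoidAlgebra.one_def]
  intro h
  rcases AddMonoidAlgebra.single_inj.mp h with ⟨h1, -⟩ | ⟨h1, -⟩
  · exact expGen_ne_zero hp n h1
  · exact one_ne_zero h1

lemma not_isUnit_XRoot_sub_one (n : ℕ) : ¬ IsUnit (XRoot F p n - 1) := by
  intro h
  have h2 := h.map (augD F p)
  rw [map_sub, map_one, XRoot, augD_single, sub_self] at h2
  exact not_isUnit_zero h2

lemma no_three (hp : p.Prime) (P₀ P₁ P₂ : Ideal (LaurentUnion F p))
    (h₁ : P₁.IsPrime) (h₂ : P₂.IsPrime) (h01 : P₀ < P₁) (h12 : P₁ < P₂) : False := by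
  obtain ⟨x, hxP₁, hxP₀⟩ := SetLike.exists_of_lt h01
  obtain ⟨y, hyP₂, hyP₁⟩ := SetLike.exists_of_lt h12
  have hx0 : x ≠ 0 := fun h => hxP₀ (h ▸ P₀.zero_mem)
  obtain ⟨m, k, l, A, B, -, hx, hy⟩ := exists_rep_pair hp x y 0
  set φ := ((Polynomial.aeval (XRoot F p m) : Polynomial F →ₐ[F] LaurentUnion F p) :
    Polynomial F →+* LaurentUnion F p) with hφ
  set J₁ := Ideal.comap φ P₁ with hJ₁
  set J₂ := Ideal.comap φ P₂ with hJ₂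
  haveI : J₁.IsPrime := Ideal.IsPrime.comap φ
  haveI : J₂.IsPrime := Ideal.IsPrime.comap φ
  obtain ⟨U, hU⟩ := isUnit_single (F := F) (k • expGen p m)
  obtain ⟨V, hV⟩ := isUnit_single (F := F) (l • expGen p m)
  have hφA : φ A ∈ P₁ := by
    have h' : (↑U⁻¹ : LaurentUnion F p) * x ∈ P₁ := Ideal.mul_mem_left _ _ hxP₁
    rwa [hx, ← hU, ← mul_assoc, U.inv_mul, one_mul] at h'
  have hA0 : A ≠ 0 := by
    rintro rfl
    rw [map_zero, mul_zero] at hx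
    exact hx0 hx
  have hAJ : A ∈ J₁ := Ideal.mem_comap.mpr hφA
  have hJ1ne : J₁ ≠ ⊥ := fun h => hA0 (by rwa [h, Ideal.mem_bot] at hAJ)
  have hmax : J₁.IsMaximal := IsPrime.to_maximal_ideal hJ1ne
  have hle : J₁ ≤ J₂ := Ideal.comap_mono h12.le
  have hφB : φ B ∈ P₂ := by
    have h' : (↑V⁻¹ : LaurentUnion F p) * y ∈ P₂ := Ideal.mul_mem_left _ _ hyP₂
    rwa [hy, ← hV, ← mul_assoc, V.inv_mul, one_mul] at h'
  have hBJ2 : B ∈ J₂ := Ideal.mem_comap.mpr hφB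
  have hBJ1 : B ∉ J₁ := by
    intro hB
    have hφB1 : φ B ∈ P₁ := Ideal.mem_comap.mp hB
    exact hyP₁ (by rw [hy, ← hV]; exact Ideal.mul_mem_left _ _ hφB1)
  have hlt : J₁ < J₂ := lt_of_le_of_ne hle (fun h => hBJ1 (h ▸ hBJ2))
  exact Ideal.IsPrime.ne_top ‹J₂.IsPrime› (hmax.1.2 J₂ hlt)

lemma laurentUnion_dim_one (hp : p.Prime) : ringKrullDim (LaurentUnion F p) = 1 := by
  apply le_antisymm
  · refine iSup_le fun c => ?_
    have hlen : c.length ≤ 1 := by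
      by_contra hb
      push_neg at hb
      have lt01 : c.toFun ⟨0, by omega⟩ < c.toFun ⟨1, by omega⟩ :=
        c.strictMono (by simp [Fin.lt_def])
      have lt12 : c.toFun ⟨1, by omega⟩ < c.toFun ⟨2, by omega⟩ :=
        c.strictMono (by simp [Fin.lt_def])
      exact no_three hp (c.toFun ⟨0, by omega⟩).asIdeal (c.toFun ⟨1, by omega⟩).asIdeal
        (c.toFun ⟨2, by omega⟩).asIdeal (c.toFun ⟨1, by omega⟩).isPrime
        (c.toFun ⟨2, by omega⟩).isPrime
        ((PrimeSpectrum.asIdeal_lt_asIdeal _ _).mpr lt01)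
        ((PrimeSpectrum.asIdeal_lt_asIdeal _ _).mpr lt12)
    exact_mod_cast hlen
  · have hne : Ideal.span {XRoot F p 0 - 1} ≠ (⊤ : Ideal (LaurentUnion F p)) := by
      rw [Ne, Ideal.span_singleton_eq_top]
      exact not_isUnit_XRoot_sub_one 0
    obtain ⟨M, hM, hMge⟩ := Ideal.exists_le_maximal _ hne
    have hMne : M ≠ ⊥ := by
      intro h
      have : XRoot F p 0 - 1 ∈ M := hMge (Ideal.subset_span rfl)
      rw [h, Ideal.mem_bot] at this
      exact XRoot_sub_one_ne_zero hp 0 this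
    let pt0 : PrimeSpectrum (LaurentUnion F p) := ⟨⊥, Ideal.bot_prime⟩
    let pt1 : PrimeSpectrum (LaurentUnion F p) := ⟨M, hM.isPrime⟩
    have hlt : pt0 < pt1 := by
      rw [← PrimeSpectrum.asIdeal_lt_asIdeal]
      exact bot_lt_iff_ne_bot.mpr hMne
    have := Order.LTSeries.length_le_krullDim ((RelSeries.singleton _ pt0).snoc pt1 hlt)
    refine le_trans (le_of_eq ?_) this
    rfl

lemma laurentUnion_not_noetherian (hp : p.Prime) :
    ¬ IsNoetherian (LaurentUnion F p) (LaurentUnion F p) := by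
  intro hNoeth
  have hdvd_mono : ∀ n, (XRoot F p (n+1) - 1) ∣ (XRoot F p n - 1) := by
    intro n
    have hx : XRoot F p (n+1) ^ p = XRoot F p n := by
      have h := XRoot_pow F hp.ne_zero (Nat.le_succ n)
      rwa [show n + 1 - n = 1 from by omega, pow_one] at h
    have h := sub_dvd_pow_sub_pow (XRoot F p (n+1)) 1 p
    rwa [one_pow, hx] at h
  set f : ℕ →o Ideal (LaurentUnion F p) :=
    ⟨fun n => Ideal.span {XRoot F p n - 1},
      monotone_nat_of_le_succ fun n =>
        Ideal.span_singleton_le_span_singleton.mpr (hdvd_mono n)⟩ with hf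
  obtain ⟨N, hN⟩ := monotone_stabilizes_iff_noetherian.mpr hNoeth f
  have heq := hN (N+1) (Nat.le_succ N)
  have hdvd : XRoot F p N - 1 ∣ XRoot F p (N+1) - 1 :=
    Ideal.span_singleton_le_span_singleton.mp (le_of_eq heq.symm)
  exact not_dvd_succ hp N hdvd

end Main2

/-- For a field `F` and a prime `p`, the ring
`D = ⋃_{n≥0} F[X^{1/pⁿ}, X^{-1/pⁿ}]` is a Bézout domain of Krull dimension one,
and `D` is not a Dedekind domain. -/
theorem laurentUnion_bezout_dimOne_not_dedekind (F : Type*) [Field F] (p : ℕ)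
    (hp : p.Prime) :
    IsBezout (LaurentUnion F p) ∧ ringKrullDim (LaurentUnion F p) = 1 ∧
      ¬ IsDedekindDomain (LaurentUnion F p) := by
  refine ⟨laurentUnion_isBezout hp, laurentUnion_dim_one hp, ?_⟩
  intro hD
  haveI := hD
  exact laurentUnion_not_noetherian hp
    (inferInstance : IsNoetherian (LaurentUnion F p) (LaurentUnion F p))
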